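/- Let G be a locally finite graph, r a positive integer, X_0 a finite set of vertices, and {W_k : k ≥ 1} a sequence of vertex sets; define X_n for n > 0 as the set of vertices connected to a vertex of X_{n-1} by a path of length at most r containing no vertex of W_1 ∪ ... ∪ W_n. Then there exists N > 0 with X_n = X_N for every n ≥ N if and only if there exists N > 0 with X_n ⊆ B_G(X_0, rN) for every n ≥ 0. -/

import Mathlib

open SimpleGraph

namespace Firefighter

variable {V : Type*}

/-- The set of vertices on fire at time `n`, starting from initial fire `X0`, with fire spreading
along paths of length at most `r` avoiding the protected sets `W 1, ..., W n`. -/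
def fireSet (G : SimpleGraph V) (r : ℕ) (X0 : Set V) (W : ℕ → Set V) : ℕ → Set V
  | 0 => X0
  | n + 1 => {v | ∃ u ∈ fireSet G r X0 W n, ∃ p : G.Walk u v, p.length ≤ r ∧
      ∀ w ∈ p.support, ∀ i, 1 ≤ i → i ≤ n + 1 → w ∉ W i}

/-- `W` is an `(f, r)`-containment strategy for the initial fire `X0` in `G`. -/
def IsContainmentStrategy (G : SimpleGraph V) (r : ℕ) (f : ℕ → ℕ)
    (X0 : Set V) (W : ℕ → Set V) : Prop :=
  (∀ n, 1 ≤ n → (W n).Finite ∧ (W n).ncard ≤ f n) ∧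
  (∀ n, Disjoint (fireSet G r X0 W n) (W (n + 1))) ∧
  (∃ N, 0 < N ∧ ∀ n, N ≤ n → fireSet G r X0 W n = fireSet G r X0 W N)

/-- `G` has the `(f, r)`-containment property. -/
def HasContainmentProperty (G : SimpleGraph V) (r : ℕ) (f : ℕ → ℕ) : Prop :=
  ∀ X0 : Set V, X0.Finite → ∃ W : ℕ → Set V, IsContainmentStrategy G r f X0 W

/-- A graph is locally finite if every vertex has finitely many neighbors. -/
def LocallyFiniteGraph (G : SimpleGraph V) : Prop := ∀ v, (G.neighborSet v).Finite

/-- The ball of radius `n` about the vertex `g0` (in the combinatorial metric). -/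
def ball (G : SimpleGraph V) (g0 : V) (n : ℕ) : Set V :=
  {v | G.Reachable g0 v ∧ G.dist g0 v ≤ n}

/-- The sphere of radius `n` about the vertex `g0` (in the combinatorial metric). -/
def sphere (G : SimpleGraph V) (g0 : V) (n : ℕ) : Set V :=
  {v | G.Reachable g0 v ∧ G.dist g0 v = n}

/-- For `T` a subset of the sphere of radius `n`, `nextAdj G g0 n T` is the set `T*` of vertices
of the sphere of radius `n+1` adjacent to at least one vertex of `T`. -/
def nextAdj (G : SimpleGraph V) (g0 : V) (n : ℕ) (T : Set V) : Set V :=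
  {v ∈ sphere G g0 (n + 1) | ∃ u ∈ T, G.Adj u v}

/-- A graph has bounded degree if there is a uniform finite bound on vertex degrees. -/
def BoundedDegree (G : SimpleGraph V) : Prop :=
  ∃ D : ℕ, ∀ v, (G.neighborSet v).Finite ∧ (G.neighborSet v).ncard ≤ D

/-- Two graphs are quasi-isometric. -/
def QuasiIsometric {V' : Type*} (G : SimpleGraph V) (H : SimpleGraph V') : Prop :=
  ∃ c : ℕ, 1 ≤ c ∧ ∃ (φ : V → V') (ψ : V' → V),
    (∀ g1 g2, H.dist (φ g1) (φ g2) ≤ c * G.dist g1 g2 + c) ∧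
    (∀ h1 h2, G.dist (ψ h1) (ψ h2) ≤ c * H.dist h1 h2 + c) ∧
    (∀ g, G.dist g (ψ (φ g)) ≤ c) ∧
    (∀ h, H.dist h (φ (ψ h)) ≤ c)

/-- `f ≼ g` : there is `c > 0` with `f n ≤ c * g (c*n + c) + c` for all `n ≥ c`. -/
def Preceq (f g : ℕ → ℕ) : Prop :=
  ∃ c : ℕ, 0 < c ∧ ∀ n, c ≤ n → f n ≤ c * g (c * n + c) + c

/-- `f` and `g` have equivalent asymptotic growth. -/
def AsympEquiv (f g : ℕ → ℕ) : Prop := Preceq f g ∧ Preceq g f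

/-- The ball of radius `n` about a set `X` of vertices. -/
def ballSet (G : SimpleGraph V) (X : Set V) (n : ℕ) : Set V :=
  {v | ∃ u ∈ X, ∃ p : G.Walk u v, p.length ≤ n}

lemma natSeq_eventually_const (f : ℕ → ℕ) (B : ℕ) (hb : ∀ n, f n ≤ B)
    (hmono : Monotone f) : ∃ N, ∀ n, N ≤ n → f n = f N := by
  have hfin : (Set.range f).Finite :=
    (Set.finite_Iic B).subset (by rintro x ⟨n, rfl⟩; exact hb n)
  obtain ⟨m, ⟨N, rfl⟩, hmax⟩ := Set.Finite.exists_maximalFor id _ hfin (Set.range_nonempty f)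
  exact ⟨N, fun n hn => le_antisymm (hmax ⟨n, rfl⟩ (hmono hn)) (hmono hn)⟩

lemma setSeq_eventually_const {V : Type*} (A : ℕ → Set V) (B : Set V) (hB : B.Finite)
    (hsub : ∀ n, A n ⊆ B) (hstep : ∀ n, A n ⊆ A (n + 1)) :
    ∃ N, ∀ n, N ≤ n → A n = A N := by
  have hchain : ∀ m n, m ≤ n → A m ⊆ A n := by
    intro m n h
    induction n with
    | zero => simpa [Nat.le_zero.mp h] using subset_rfl
    | succ k ih =>
      rcases Nat.lt_or_ge m (k + 1) with h' | h'
      · exact (ih (Nat.lt_succ_iff.mp h')).trans (hstep k)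
      · have : m = k + 1 := le_antisymm h h'
        simp [this]
  have hfin : ∀ n, (A n).Finite := fun n => hB.subset (hsub n)
  obtain ⟨N, hN⟩ := natSeq_eventually_const (fun n => (A n).ncard) B.ncard
    (fun n => Set.ncard_le_ncard (hsub n) hB)
    (fun m n h => Set.ncard_le_ncard (hchain m n h) (hfin n))
  refine ⟨N, fun n hn => ?_⟩
  exact (Set.eq_of_subset_of_ncard_le (hchain N n hn) (le_of_eq (hN n hn)) (hfin n)).symm

lemma ballSet_mono {V : Type*} (G : SimpleGraph V) (X0 : Set V) {m n : ℕ} (h : m ≤ n) :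
    ballSet G X0 m ⊆ ballSet G X0 n := by
  rintro v ⟨u, hu, p, hp⟩
  exact ⟨u, hu, p, hp.trans h⟩

lemma ballSet_finite {V : Type*} (G : SimpleGraph V) (hlf : LocallyFiniteGraph G)
    (n : ℕ) (X0 : Set V) (hX0 : X0.Finite) : (ballSet G X0 n).Finite := by
  induction n generalizing X0 with
  | zero =>
    refine hX0.subset ?_
    rintro v ⟨u, hu, p, hp⟩
    have : p.length = 0 := Nat.le_zero.mp hp
    rw [(SimpleGraph.Walk.eq_of_length_eq_zero this : u = v)] at hu
    exact hu
  | succ n ih =>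
    set Y : Set V := X0 ∪ ⋃ u ∈ X0, G.neighborSet u with hY
    have hYfin : Y.Finite := hX0.union (hX0.biUnion (fun u _ => hlf u))
    refine (ih Y hYfin).subset ?_
    rintro v ⟨u, hu, p, hp⟩
    cases p with
    | nil => exact ⟨v, Or.inl hu, SimpleGraph.Walk.nil, by simpa using Nat.zero_le n⟩
    | cons h q =>
      rename_i w
      refine ⟨w, Or.inr ?_, q, ?_⟩
      · exact Set.mem_biUnion hu h
      · simpa using Nat.succ_le_succ_iff.mp hp

lemma fireSet_subset_ballSet {V : Type*} (G : SimpleGraph V) (r : ℕ) (X0 : Set V)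
    (W : ℕ → Set V) (n : ℕ) : fireSet G r X0 W n ⊆ ballSet G X0 (r * n) := by
  induction n with
  | zero =>
    intro v hv
    exact ⟨v, hv, SimpleGraph.Walk.nil, by simp⟩
  | succ n ih =>
    rintro v ⟨u, hu, q, hq, -⟩
    obtain ⟨u0, hu0, p, hp⟩ := ih hu
    refine ⟨u0, hu0, p.append q, ?_⟩
    rw [SimpleGraph.Walk.length_append, Nat.mul_succ]
    exact Nat.add_le_add hp hq

/-- for a locally finite graph, the fire is eventually constant iff the fire stays
within some ball `B_G(X_0, r·N)`. -/
theorem stmt11 {V : Type*} (G : SimpleGraph V) (hlf : LocallyFiniteGraph G)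
    (r : ℕ) (hr : 1 ≤ r) (X0 : Set V) (hX0 : X0.Finite) (W : ℕ → Set V) :
    (∃ N : ℕ, 0 < N ∧ ∀ n, N ≤ n → fireSet G r X0 W n = fireSet G r X0 W N) ↔
    (∃ N : ℕ, 0 < N ∧ ∀ n, fireSet G r X0 W n ⊆ ballSet G X0 (r * N)) := by
  constructor
  · rintro ⟨N, hN, hconst⟩
    refine ⟨N, hN, fun n => ?_⟩
    rcases Nat.le_total n N with h | h
    · exact (fireSet_subset_ballSet G r X0 W n).trans
        (ballSet_mono G X0 (Nat.mul_le_mul_left r h))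
    · rw [hconst n h]
      exact fireSet_subset_ballSet G r X0 W N
  · rintro ⟨N, hN, hsub⟩
    set B : Set V := ballSet G X0 (r * N) with hB
    have hBfin : B.Finite := ballSet_finite G hlf (r * N) X0 hX0
    -- the trace of the protected sets on B stabilizes
    set S : ℕ → Set V := fun n => {v | v ∈ B ∧ ∃ i, 1 ≤ i ∧ i ≤ n ∧ v ∈ W i} with hS
    obtain ⟨M0, hM0⟩ := setSeq_eventually_const S B hBfin
      (fun n v hv => hv.1)
      (fun n v hv => ⟨hv.1, hv.2.choose, hv.2.choose_spec.1,
        hv.2.choose_spec.2.1.trans (Nat.le_succ n), hv.2.choose_spec.2.2⟩)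
    set M : ℕ := max M0 1 with hM
    have hM1 : 1 ≤ M := le_max_right _ _
    -- fire is increasing beyond M
    have hincr : ∀ n, M ≤ n → fireSet G r X0 W n ⊆ fireSet G r X0 W (n + 1) := by
      intro n hn u hu
      obtain ⟨m, rfl⟩ : ∃ m, n = m + 1 :=
        ⟨n - 1, (Nat.succ_pred_eq_of_pos (hM1.trans hn)).symm⟩
      obtain ⟨u0, hu0, p, hp, hav⟩ := hu
      have humem : u ∈ p.support := SimpleGraph.Walk.end_mem_support p
      have hnotW : ∀ i, 1 ≤ i → i ≤ m + 2 → u ∉ W i := by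
        intro i hi1 hi2 hiW
        rcases Nat.lt_or_ge i (m + 2) with h' | h'
        · exact hav u humem i hi1 (Nat.lt_succ_iff.mp h') hiW
        · have hieq : i = m + 2 := le_antisymm hi2 h'
          have huB : u ∈ B := hsub (m + 1) ⟨u0, hu0, p, hp, hav⟩
          have h1 : u ∈ S (m + 2) := ⟨huB, i, hi1, le_of_eq hieq, hiW⟩
          have h2 : u ∈ S (m + 1) := by
            rw [hM0 (m + 1) ((le_max_left M0 1).trans hn)]
            rw [← hM0 (m + 2) (((le_max_left M0 1).trans hn).trans (Nat.le_succ _))]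
            exact h1
          obtain ⟨-, j, hj1, hj2, hjW⟩ := h2
          exact hav u humem j hj1 hj2 hjW
      exact ⟨u, ⟨u0, hu0, p, hp, hav⟩, SimpleGraph.Walk.nil, by
        simp only [SimpleGraph.Walk.length_nil]
        exact Nat.zero_le r, by
        intro w hw
        simp only [SimpleGraph.Walk.support_nil, List.mem_singleton] at hw
        subst hw
        exact hnotW⟩
    -- the increasing sequence stabilizes inside the finite ball
    obtain ⟨K, hK⟩ := setSeq_eventually_const (fun k => fireSet G r X0 W (M + k)) B hBfin
      (fun k => hsub (M + k))
      (fun k => hincr (M + k) (Nat.le_add_right M k))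
    refine ⟨M + K, Nat.lt_of_lt_of_le hM1 (Nat.le_add_right M K), fun n hn => ?_⟩
    have : n = M + (n - M) := by omega
    rw [this, hK (n - M) (by omega)]

end Firefighter
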